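/- arXiv:2007.11905 — 2 statements merged into one kernel-verified Lean document; each statement's English description precedes it below -/
import Mathlib

section
/- Let U and V be even MPO tensors over the same physical index set {0,…,d−1} and parity function, such that U/√d and V/√d are graded normal degenerate tensors and each of U and V generates a type II fMPU with antiperiodic boundary conditions. Then there exist an integer D′ ≥ 1, a diagonal ±1 matrix Z′ ∈ M_{D′}(ℂ), and an even MPO tensor W with respect to Z′ such that for every N ≥ 1: W^{(N)} = (2^{−1/2} U^{(N)}) · (2^{−1/2} V^{(N)}) as matrices in M_{d^N}(ℂ). In particular, the product of two type II fMPUs can be represented as a type I fMPU. -/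
open Matrix Kronecker
open scoped ComplexOrder

namespace FQCA

noncomputable section

/-- The sign `(-1)^x` associated with a parity `x ∈ ℤ₂`. -/
def sgn (x : ZMod 2) : ℂ := (-1 : ℂ) ^ x.val

/-- Entrywise complex conjugation of a matrix. -/
def mconj {m n : Type*} (A : Matrix m n ℂ) : Matrix m n ℂ := A.map (starRingEnd ℂ)

/-- A diagonal matrix with diagonal entries `±1`. -/
def IsParityMatrix {ν : Type*} (Z : Matrix ν ν ℂ) : Prop :=
  Z.IsDiag ∧ ∀ α, Z α α = 1 ∨ Z α α = -1

/-- An even tensor: `Z * A i = (-1)^{|i|} A i * Z`. -/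
def EvenTensor {ι ν : Type*} [Fintype ν] (p : ι → ZMod 2)
    (A : ι → Matrix ν ν ℂ) (Z : Matrix ν ν ℂ) : Prop :=
  ∀ i, Z * A i = sgn (p i) • (A i * Z)

/-- The transfer matrix `E_A = Σ_i A^i ⊗ conj (A^i)`. -/
def transfer {ι ν : Type*} [Fintype ι] (A : ι → Matrix ν ν ℂ) :
    Matrix (ν × ν) (ν × ν) ℂ :=
  ∑ i, (A i) ⊗ₖ (mconj (A i))

/-- `P` is the orthogonal projector of a nonzero proper graded invariant subspace for `A`. -/
def GradedInvariantProj {ι ν : Type*} [Fintype ν] [DecidableEq ν]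
    (A : ι → Matrix ν ν ℂ) (Z P : Matrix ν ν ℂ) : Prop :=
  P * P = P ∧ Pᴴ = P ∧ P ≠ 0 ∧ P ≠ 1 ∧ P * Z = Z * P ∧ ∀ i, A i * P = P * (A i * P)

/-- A graded irreducible tensor: no nonzero proper graded invariant subspace. -/
def GradedIrreducible {ι ν : Type*} [Fintype ν] [DecidableEq ν]
    (A : ι → Matrix ν ν ℂ) (Z : Matrix ν ν ℂ) : Prop :=
  ¬ ∃ P, GradedInvariantProj A Z P

/-- A graded normal tensor, `mult = 1` (non-degenerate) or `2` (degenerate):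
graded irreducible, `1` is an eigenvalue of the transfer matrix of algebraic multiplicity
`mult`, and all other eigenvalues have modulus `< 1`. -/
def GradedNormal {ι ν : Type*} [Fintype ι] [Fintype ν] [DecidableEq ν]
    (A : ι → Matrix ν ν ℂ) (Z : Matrix ν ν ℂ) (mult : ℕ) : Prop :=
  GradedIrreducible A Z ∧
  (Matrix.charpoly (transfer A)).rootMultiplicity 1 = mult ∧
  ∀ μ ∈ spectrum ℂ (transfer A), μ ≠ 1 → ‖μ‖ < 1

/-- Graded Canonical Form: `A^i = ⊕ₖ μₖ Aₖ^i` with `Z` block diagonal in the same way and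
every block a graded normal tensor. -/
def GCF {ι ν : Type*} [Fintype ι] [Fintype ν] [DecidableEq ν]
    (p : ι → ZMod 2) (A : ι → Matrix ν ν ℂ) (Z : Matrix ν ν ℂ) : Prop :=
  ∃ (g : ℕ) (Dk : Fin g → ℕ) (e : ν ≃ ((k : Fin g) × Fin (Dk k)))
    (μ : Fin g → ℂ)
    (Ak : (k : Fin g) → ι → Matrix (Fin (Dk k)) (Fin (Dk k)) ℂ)
    (Zk : (k : Fin g) → Matrix (Fin (Dk k)) (Fin (Dk k)) ℂ),
    0 < g ∧
    (∀ i, Matrix.reindex e e (A i) = Matrix.blockDiagonal' (fun k => μ k • Ak k i)) ∧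
    Matrix.reindex e e Z = Matrix.blockDiagonal' Zk ∧
    ∀ k, IsParityMatrix (Zk k) ∧ EvenTensor p (Ak k) (Zk k) ∧
      (GradedNormal (Ak k) (Zk k) 1 ∨ GradedNormal (Ak k) (Zk k) 2)

/-- The coefficient `tr(A^{n₁} ⋯ A^{n_N})` of the fMPS with antiperiodic boundary
conditions generated by the tensor `A`. -/
def mpsCoeff {ι ν : Type*} [Fintype ν] [DecidableEq ν] {N : ℕ}
    (A : ι → Matrix ν ν ℂ) (n : Fin N → ι) : ℂ :=
  ((List.ofFn fun j => A (n j)).prod).trace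

/-- The fermionic sign `σ(n,m) = Σ_{k<j} (|n_j|+|m_j|)·|m_k|` of an fMPO matrix element. -/
def mpoSign {ι : Type*} (p : ι → ZMod 2) {N : ℕ} (n m : Fin N → ι) : ZMod 2 :=
  ∑ jk ∈ Finset.univ.filter (fun jk : Fin N × Fin N => jk.2 < jk.1),
    (p (n jk.1) + p (m jk.1)) * p (m jk.2)

/-- The fMPO with antiperiodic boundary conditions generated by the MPO tensor `U`. -/
def fMPO {ι : Type*} (p : ι → ZMod 2) {ν : Type*} [Fintype ν] [DecidableEq ν]
    (U : ι → ι → Matrix ν ν ℂ) (N : ℕ) :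
    Matrix (Fin N → ι) (Fin N → ι) ℂ :=
  Matrix.of fun n m =>
    sgn (mpoSign p n m) * ((List.ofFn fun j => U (n j) (m j)).prod).trace

/-- The fMPO with periodic boundary conditions generated by the MPO tensor `U`
(parity operator `Z` inserted in the trace). -/
def fMPO_PBC {ι : Type*} (p : ι → ZMod 2) {ν : Type*} [Fintype ν] [DecidableEq ν]
    (Z : Matrix ν ν ℂ) (U : ι → ι → Matrix ν ν ℂ) (N : ℕ) :
    Matrix (Fin N → ι) (Fin N → ι) ℂ :=
  Matrix.of fun n m =>
    sgn (mpoSign p n m) * (Z * (List.ofFn fun j => U (n j) (m j)).prod).trace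

/-- The fermionic blocking sign `τ(n,m) = Σ_{j<l} |m_j|·(|n_l|+|m_l|)`. -/
def blockSign {ι : Type*} (p : ι → ZMod 2) {q : ℕ} (n m : Fin q → ι) : ZMod 2 :=
  ∑ jl ∈ Finset.univ.filter (fun jl : Fin q × Fin q => jl.1 < jl.2),
    p (m jl.1) * (p (n jl.2) + p (m jl.2))

/-- The `q`-fold blocked MPO tensor, with the fermionic blocking signs. -/
def blocked {ι : Type*} (p : ι → ZMod 2) {ν : Type*} [Fintype ν] [DecidableEq ν]
    (U : ι → ι → Matrix ν ν ℂ) (q : ℕ) :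
    (Fin q → ι) → (Fin q → ι) → Matrix ν ν ℂ :=
  fun n m => sgn (blockSign p n m) • ((List.ofFn fun j => U (n j) (m j)).prod)

/-- The right rank `r(U)`: rank of the matrix with entry
`(-1)^{|n||m|} (U^{n,m})_{α,β}` in row `(n,β)` and column `(m,α)`. -/
def rightRank {ι ν : Type*} [Fintype ι] [Fintype ν]
    (p : ι → ZMod 2) (U : ι → ι → Matrix ν ν ℂ) : ℕ :=
  (Matrix.of fun (r c : ι × ν) => sgn (p r.1 * p c.1) * U r.1 c.1 c.2 r.2).rank

/-- The left rank `ℓ(U)`: rank of the matrix with entry `(U^{n,m})_{α,β}`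
in row `(n,α)` and column `(m,β)`. -/
def leftRank {ι ν : Type*} [Fintype ι] [Fintype ν]
    (U : ι → ι → Matrix ν ν ℂ) : ℕ :=
  (Matrix.of fun (r c : ι × ν) => U r.1 c.1 r.2 c.2).rank

/-- The Pauli matrix `σˣ`, indexed by `Bool`. -/
def pauliX : Matrix Bool Bool ℂ := Matrix.of fun a b => if a = b then 0 else 1

/-- The Pauli matrix `σᶻ`, indexed by `Bool`. -/
def pauliZ : Matrix Bool Bool ℂ := Matrix.diagonal (fun b => if b then -1 else 1)

/-- The single-site physical parity matrix `P = diag((-1)^{|i|})`. -/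
def singleP {ι : Type*} [DecidableEq ι] (p : ι → ZMod 2) : Matrix ι ι ℂ :=
  Matrix.diagonal (fun i => sgn (p i))

/-- The parity of the doubled physical index `(n,m)` of an MPO tensor. -/
def doubledP {ι : Type*} (p : ι → ZMod 2) : ι × ι → ZMod 2 :=
  fun nm => p nm.1 + p nm.2

/-- An MPO tensor regarded as a tensor in the doubled physical index. -/
def doubledT {ι ν : Type*} (U : ι → ι → Matrix ν ν ℂ) : ι × ι → Matrix ν ν ℂ :=
  fun nm => U nm.1 nm.2

/-- An MPO tensor rescaled by `c`, regarded as a tensor in the doubled physical index. -/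
def mpoScaled {ι ν : Type*} (c : ℂ) (U : ι → ι → Matrix ν ν ℂ) : ι × ι → Matrix ν ν ℂ :=
  fun nm => c • U nm.1 nm.2

/-- The parity operator `σᶻ ⊗ I` on the bond space `Bool × Fin b`. -/
def ZBP (b : ℕ) : Matrix (Bool × Fin b) (Bool × Fin b) ℂ :=
  pauliZ ⊗ₖ (1 : Matrix (Fin b) (Fin b) ℂ)

/-- Structure of a type II MPO tensor: `U^{n,m} = (σˣ)^{|n|+|m|} ⊗ N^{n,m}`. -/
def TypeIIStruct {d b : ℕ} (p : Fin d → ZMod 2)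
    (U : Fin d → Fin d → Matrix (Bool × Fin b) (Bool × Fin b) ℂ) : Prop :=
  ∃ Nm : Fin d → Fin d → Matrix (Fin b) (Fin b) ℂ,
    ∀ n m', U n m' = (pauliX ^ (p n + p m').val) ⊗ₖ Nm n m'

/-- The parity matrix of the product grading on `q` sites. -/
def bigP {d : ℕ} (p : Fin d → ZMod 2) (q : ℕ) :
    Matrix (Fin q → Fin d) (Fin q → Fin d) ℂ :=
  Matrix.diagonal (fun n => sgn (∑ i, p (n i)))

/-- The Jordan-Wigner embedding at site `j` of a local operator `O` homogeneous of
parity `o`: `P^{|O|} ⊗ ⋯ ⊗ P^{|O|} ⊗ O ⊗ I ⊗ ⋯ ⊗ I`. -/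
def jordanWigner {d N : ℕ} (p : Fin d → ZMod 2) (o : ZMod 2)
    (O : Matrix (Fin d) (Fin d) ℂ) (j : Fin N) :
    Matrix (Fin N → Fin d) (Fin N → Fin d) ℂ :=
  Matrix.of fun n m =>
    (∏ l ∈ Finset.univ.filter (fun l : Fin N => l < j),
      ((singleP p) ^ o.val) (n l) (m l)) *
    O (n j) (m j) *
    (∏ l ∈ Finset.univ.filter (fun l : Fin N => j < l),
      (if n l = m l then (1:ℂ) else 0))


/-! ### Auxiliary material for Statement 11 -/

/-- The Pauli matrix `σʸ`, indexed by `Bool`. -/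
def syM : Matrix Bool Bool ℂ :=
  Matrix.of fun a b => if a = b then 0 else (if a then Complex.I else -Complex.I)

/-- `Smat a b = σˣ^a σʸ^b`, a projective representation of `ℤ₂ × ℤ₂`. -/
def Smat (a b : ZMod 2) : Matrix Bool Bool ℂ := pauliX ^ a.val * syM ^ b.val

lemma zmod2_cases (a : ZMod 2) : a = 0 ∨ a = 1 := by revert a; decide

lemma two_eq_zero' : (1 + 1 : ZMod 2) = 0 := by decide

@[simp] lemma sgn_zero : sgn 0 = 1 := by simp [sgn]
@[simp] lemma sgn_one : sgn 1 = -1 := by simp [sgn, ZMod.val_one]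

lemma sgn_add (a b : ZMod 2) : sgn (a + b) = sgn a * sgn b := by
  rcases zmod2_cases a with rfl | rfl <;> rcases zmod2_cases b with rfl | rfl <;>
    simp [two_eq_zero']

lemma Smat_zero_zero : Smat 0 0 = 1 := by simp [Smat]

lemma Smat_right_zero (a : ZMod 2) : Smat a 0 = pauliX ^ a.val := by simp [Smat]

lemma Smat_mul (a b c d : ZMod 2) :
    Smat a b * Smat c d = sgn (b * c) • Smat (a + c) (b + d) := by
  rcases zmod2_cases a with rfl | rfl <;> rcases zmod2_cases b with rfl | rfl <;>
    rcases zmod2_cases c with rfl | rfl <;> rcases zmod2_cases d with rfl | rfl <;>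
    · ext i j
      cases i <;> cases j <;>
        · simp only [Smat, two_eq_zero', zero_add, add_zero, mul_zero, zero_mul, mul_one, one_mul,
            ZMod.val_zero, ZMod.val_one, pow_zero, pow_one, sgn_zero, sgn_one, one_smul, neg_smul]
          try simp [pauliX, syM, Matrix.mul_apply, Fintype.sum_bool, Matrix.one_apply,
            Complex.I_mul_I]
          try ring_nf
          try simp [Complex.I_sq]

lemma pauliZ_mul_Smat (a b : ZMod 2) :
    pauliZ * Smat a b = sgn (a + b) • (Smat a b * pauliZ) := by
  rcases zmod2_cases a with rfl | rfl <;> rcases zmod2_cases b with rfl | rfl <;>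
    · ext i j
      cases i <;> cases j <;>
        · simp only [Smat, two_eq_zero', zero_add, add_zero, ZMod.val_zero, ZMod.val_one,
            pow_zero, pow_one, sgn_zero, sgn_one, one_smul, neg_smul, mul_one, one_mul]
          try simp [pauliX, syM, pauliZ, Matrix.mul_apply, Fintype.sum_bool, Matrix.one_apply,
            Matrix.diagonal]
          try ring

lemma Smat_trace (a b : ZMod 2) :
    (Smat a b).trace = if a = 0 ∧ b = 0 then 2 else 0 := by
  rcases zmod2_cases a with rfl | rfl <;> rcases zmod2_cases b with rfl | rfl <;>
    · simp only [Smat, ZMod.val_zero, ZMod.val_one, pow_zero, pow_one, mul_one, one_mul]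
      simp [Matrix.trace, Matrix.diag, pauliX, syM, Matrix.mul_apply, Fintype.sum_bool,
        Matrix.one_apply]
      try decide

lemma Smat_trace_split (a b : ZMod 2) :
    (Smat a b).trace = (2:ℂ)⁻¹ * ((Smat a 0).trace * (Smat b 0).trace) := by
  rcases zmod2_cases a with rfl | rfl <;> rcases zmod2_cases b with rfl | rfl <;>
    simp [Smat_trace] <;> norm_num

/-- Sum over ordered pairs `{(j,i) : i < j}` of `g j i`. -/
def pairSum {M : Type*} [AddCommMonoid M] (N : ℕ) (g : Fin N → Fin N → M) : M :=
  ∑ jk ∈ Finset.univ.filter (fun jk : Fin N × Fin N => jk.2 < jk.1), g jk.1 jk.2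

lemma pairSum_succ {M : Type*} [AddCommMonoid M] (N : ℕ) (g : Fin (N+1) → Fin (N+1) → M) :
    pairSum (N+1) g = (∑ j : Fin N, g j.succ 0) +
      pairSum N (fun j i => g j.succ i.succ) := by
  unfold pairSum
  rw [Finset.sum_filter, Finset.sum_filter, Fintype.sum_prod_type, Fintype.sum_prod_type]
  rw [Fin.sum_univ_succ]
  simp only [Fin.not_lt_zero, if_false, Finset.sum_const_zero, zero_add]
  have h : ∀ j : Fin N, (∑ i : Fin (N+1), if i < j.succ then g j.succ i else 0)
      = g j.succ 0 + ∑ i : Fin N, if i < j then g j.succ i.succ else 0 := by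
    intro j
    rw [Fin.sum_univ_succ]
    simp [Fin.succ_lt_succ_iff, Fin.succ_pos]
  simp only [h]
  rw [Finset.sum_add_distrib]

lemma mpoSign_eq_pairSum {ι : Type*} (p : ι → ZMod 2) {N : ℕ} (n m : Fin N → ι) :
    mpoSign p n m = pairSum N (fun j i => (p (n j) + p (m j)) * p (m i)) := rfl

/-- The four-sign cancellation identity in `ℤ₂`. -/
lemma zmod2_sign_identity (a b c b' c' : ZMod 2) :
    (a+b)*b' + (b+c)*c' = (a+c)*c' + (b'+c')*(a+b) := by revert a b c b' c'; decide

lemma sign_identity {d : ℕ} (p : Fin d → ZMod 2) {N : ℕ} (n m k : Fin N → Fin d) :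
    mpoSign p n k + mpoSign p k m =
      mpoSign p n m + pairSum N (fun j i => (p (k i) + p (m i)) * (p (n j) + p (k j))) := by
  simp only [mpoSign_eq_pairSum, pairSum]
  rw [← Finset.sum_add_distrib, ← Finset.sum_add_distrib]
  exact Finset.sum_congr rfl fun jk _ =>
    zmod2_sign_identity (p (n jk.1)) (p (k jk.1)) (p (m jk.1)) (p (k jk.2)) (p (m jk.2))

lemma listProd_kronecker {ρ ρ' : Type*} [Fintype ρ] [DecidableEq ρ] [Fintype ρ']
    [DecidableEq ρ'] {N : ℕ} (A : Fin N → Matrix ρ ρ ℂ) (B : Fin N → Matrix ρ' ρ' ℂ) :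
    (List.ofFn fun j => A j ⊗ₖ B j).prod =
      (List.ofFn A).prod ⊗ₖ (List.ofFn B).prod := by
  induction N with
  | zero => simp [Matrix.one_kronecker_one]
  | succ N ih =>
    rw [List.ofFn_succ, List.ofFn_succ, List.ofFn_succ, List.prod_cons, List.prod_cons,
      List.prod_cons, ih, Matrix.mul_kronecker_mul]

lemma listProd_sum_expand {R : Type*} [Semiring R] {d : ℕ} (N : ℕ)
    (T : Fin N → Fin d → R) :
    (List.ofFn fun j => ∑ k, T j k).prod
      = ∑ k : Fin N → Fin d, (List.ofFn fun j => T j (k j)).prod := by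
  induction N with
  | zero => simp
  | succ N ih =>
    rw [List.ofFn_succ, List.prod_cons, ih (fun j k => T j.succ k)]
    rw [Finset.sum_mul_sum]
    rw [← (Fin.consEquiv (fun _ : Fin (N+1) => Fin d)).sum_comp]
    rw [Fintype.sum_prod_type]
    refine Finset.sum_congr rfl fun k0 _ => Finset.sum_congr rfl fun kt _ => ?_
    rw [List.ofFn_succ, List.prod_cons]
    simp [Fin.consEquiv]

/-- The master product lemma for `Smat`-Kronecker tensors. -/
lemma smat_listProd {ρ : Type*} [Fintype ρ] [DecidableEq ρ] {N : ℕ}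
    (e f : Fin N → ZMod 2) (M : Fin N → Matrix ρ ρ ℂ) :
    (List.ofFn fun j => Smat (e j) (f j) ⊗ₖ M j).prod =
      sgn (pairSum N (fun j i => f i * e j)) •
        (Smat (∑ j, e j) (∑ j, f j) ⊗ₖ (List.ofFn M).prod) := by
  induction N with
  | zero =>
    simp [pairSum, Smat_zero_zero, Matrix.one_kronecker_one]
  | succ N ih =>
    rw [List.ofFn_succ, List.prod_cons, ih (fun j => e j.succ) (fun j => f j.succ)]
    rw [mul_smul_comm, ← Matrix.mul_kronecker_mul, List.ofFn_succ, List.prod_cons]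
    rw [Smat_mul, Matrix.smul_kronecker, pairSum_succ, Fin.sum_univ_succ e, Fin.sum_univ_succ f]
    rw [smul_smul, ← sgn_add]
    congr 2
    rw [Finset.mul_sum]
    ring

/-- fMPO entries of a type-II structured tensor. -/
lemma fMPO_typeII_entry {d b : ℕ} (p : Fin d → ZMod 2)
    (Nu : Fin d → Fin d → Matrix (Fin b) (Fin b) ℂ) (N : ℕ) (n m : Fin N → Fin d) :
    fMPO p (fun n' m' => Smat (p n' + p m') 0 ⊗ₖ Nu n' m') N n m =
      sgn (mpoSign p n m) *
        ((Smat (∑ j, (p (n j) + p (m j))) 0).trace *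
          ((List.ofFn fun j => Nu (n j) (m j)).prod).trace) := by
  show sgn (mpoSign p n m) * _ = _
  congr 1
  rw [show (List.ofFn fun j => Smat (p (n j) + p (m j)) 0 ⊗ₖ Nu (n j) (m j)) =
      (List.ofFn fun j => Smat ((fun j => p (n j) + p (m j)) j) ((fun _ => (0:ZMod 2)) j)
        ⊗ₖ (fun j => Nu (n j) (m j)) j) from rfl]
  rw [smat_listProd]
  simp only [zero_mul, mul_zero]
  have h0 : pairSum N (fun _ _ : Fin N => (0:ZMod 2)) = 0 := by simp [pairSum]
  rw [h0, sgn_zero, one_smul, Finset.sum_const_zero, Matrix.trace_kronecker]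

/-- Every matrix over an empty index type has an all-zero fMPO. -/
lemma bond_dim_pos {d b : ℕ} (hd : 1 ≤ d) (p : Fin d → ZMod 2)
    (U : Fin d → Fin d → Matrix (Bool × Fin b) (Bool × Fin b) ℂ)
    (hUu : ((Real.sqrt 2 : ℂ))⁻¹ • fMPO p U 1 ∈ Matrix.unitaryGroup (Fin 1 → Fin d) ℂ) :
    1 ≤ b := by
  by_contra hb
  push_neg at hb
  interval_cases b
  have hz : fMPO p U 1 = 0 := by
    ext n m
    show sgn (mpoSign p n m) * _ = 0
    have hz : ((List.ofFn fun j : Fin 1 => U (n j) (m j)).prod).trace = 0 := by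
      simp [Matrix.trace]
    rw [hz, mul_zero]
  rw [hz, smul_zero] at hUu
  have h1 : (0 : Matrix (Fin 1 → Fin d) (Fin 1 → Fin d) ℂ) * star 0 = 1 :=
    (Matrix.mem_unitaryGroup_iff).mp hUu
  rw [Matrix.zero_mul] at h1
  have n0 : Fin 1 → Fin d := fun _ => ⟨0, hd⟩
  have := congrFun (congrFun h1 n0) n0
  rw [Matrix.one_apply_eq] at this
  exact zero_ne_one this

/-- fMPO entries of the product tensor `W₀`. -/
lemma fMPO_W_entry {d bu bv : ℕ} (p : Fin d → ZMod 2)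
    (Nu : Fin d → Fin d → Matrix (Fin bu) (Fin bu) ℂ)
    (Nv : Fin d → Fin d → Matrix (Fin bv) (Fin bv) ℂ) (N : ℕ) (n m : Fin N → Fin d) :
    fMPO p (fun n' m' => ∑ k, Smat (p n' + p k) (p k + p m') ⊗ₖ (Nu n' k ⊗ₖ Nv k m')) N n m =
      ∑ k : Fin N → Fin d,
        sgn (mpoSign p n m) *
          sgn (pairSum N fun j i => (p (k i) + p (m i)) * (p (n j) + p (k j))) *
          (Smat (∑ j, (p (n j) + p (k j))) (∑ j, (p (k j) + p (m j)))).trace *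
          ((List.ofFn fun j => Nu (n j) (k j)).prod).trace *
          ((List.ofFn fun j => Nv (k j) (m j)).prod).trace := by
  show sgn (mpoSign p n m) * _ = _
  rw [show (List.ofFn fun j => ∑ k, Smat (p (n j) + p k) (p k + p (m j)) ⊗ₖ
        (Nu (n j) k ⊗ₖ Nv k (m j)))
      = (List.ofFn fun j => ∑ k, (fun (j : Fin N) (k : Fin d) =>
          Smat (p (n j) + p k) (p k + p (m j)) ⊗ₖ (Nu (n j) k ⊗ₖ Nv k (m j))) j k) from rfl]
  rw [listProd_sum_expand, Matrix.trace_sum, Finset.mul_sum]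
  refine Finset.sum_congr rfl fun k _ => ?_
  rw [show (List.ofFn fun j => Smat (p (n j) + p (k j)) (p (k j) + p (m j)) ⊗ₖ
        (Nu (n j) (k j) ⊗ₖ Nv (k j) (m j)))
      = (List.ofFn fun j => Smat ((fun j => p (n j) + p (k j)) j)
          ((fun j => p (k j) + p (m j)) j) ⊗ₖ
          (fun j => Nu (n j) (k j) ⊗ₖ Nv (k j) (m j)) j) from rfl]
  rw [smat_listProd, Matrix.trace_smul, listProd_kronecker, Matrix.trace_kronecker,
    Matrix.trace_kronecker, smul_eq_mul]
  ring

lemma reindex_mul {ν ν' : Type*} [Fintype ν] [DecidableEq ν] [Fintype ν'] [DecidableEq ν']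
    (e : ν ≃ ν') (A B : Matrix ν ν ℂ) :
    (Matrix.reindex e e A) * (Matrix.reindex e e B) = Matrix.reindex e e (A * B) :=
  Matrix.submatrix_mul_equiv A B e.symm e.symm e.symm

lemma trace_reindex {ν ν' : Type*} [Fintype ν] [DecidableEq ν] [Fintype ν'] [DecidableEq ν']
    (e : ν ≃ ν') (A : Matrix ν ν ℂ) :
    (Matrix.reindex e e A).trace = A.trace := by
  simp only [Matrix.trace, Matrix.diag, Matrix.reindex_apply, Matrix.submatrix_apply]
  exact Equiv.sum_comp e.symm (fun i => A i i)

lemma listProd_reindex {ν ν' : Type*} [Fintype ν] [DecidableEq ν] [Fintype ν']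
    [DecidableEq ν'] (e : ν ≃ ν') {N : ℕ} (T : Fin N → Matrix ν ν ℂ) :
    (List.ofFn fun j => Matrix.reindex e e (T j)).prod =
      Matrix.reindex e e (List.ofFn T).prod := by
  induction N with
  | zero => simp [Matrix.reindex_apply, Matrix.submatrix_one_equiv]
  | succ N ih =>
    rw [List.ofFn_succ, List.ofFn_succ, List.prod_cons, List.prod_cons,
      ih (fun j => T j.succ), reindex_mul]

lemma fMPO_reindex {d : ℕ} (p : Fin d → ZMod 2) {ν ν' : Type*} [Fintype ν] [DecidableEq ν]
    [Fintype ν'] [DecidableEq ν'] (e : ν ≃ ν') (W : Fin d → Fin d → Matrix ν ν ℂ) (N : ℕ) :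
    fMPO p (fun n' m' => Matrix.reindex e e (W n' m')) N = fMPO p W N := by
  ext n m
  show sgn _ * _ = sgn _ * _
  congr 1
  rw [show (List.ofFn fun j => Matrix.reindex e e (W (n j) (m j)))
      = (List.ofFn fun j => Matrix.reindex e e ((fun j => W (n j) (m j)) j)) from rfl]
  rw [listProd_reindex, trace_reindex]

lemma zmod2_mid (a b c : ZMod 2) : (a + b) + (b + c) = a + c := by
  revert a b c; decide

/-- Evenness of the product tensor. -/
lemma W0_even {d bu bv : ℕ} (p : Fin d → ZMod 2)
    (Nu : Fin d → Fin d → Matrix (Fin bu) (Fin bu) ℂ)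
    (Nv : Fin d → Fin d → Matrix (Fin bv) (Fin bv) ℂ) (a b : Fin d) :
    (pauliZ ⊗ₖ (1 : Matrix (Fin bu × Fin bv) (Fin bu × Fin bv) ℂ)) *
        (∑ k, Smat (p a + p k) (p k + p b) ⊗ₖ (Nu a k ⊗ₖ Nv k b)) =
      sgn (p a + p b) •
        ((∑ k, Smat (p a + p k) (p k + p b) ⊗ₖ (Nu a k ⊗ₖ Nv k b)) *
          (pauliZ ⊗ₖ (1 : Matrix (Fin bu × Fin bv) (Fin bu × Fin bv) ℂ))) := by
  rw [Finset.mul_sum, Finset.sum_mul, Finset.smul_sum]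
  refine Finset.sum_congr rfl fun k _ => ?_
  rw [← Matrix.mul_kronecker_mul, ← Matrix.mul_kronecker_mul, pauliZ_mul_Smat,
    Matrix.smul_kronecker, one_mul, mul_one, zmod2_mid]

/-- The product of two type II fMPUs with antiperiodic boundary
conditions can be represented as an fMPO generated by a single even MPO tensor, which is
then a type I fMPU. -/
theorem typeII_product_is_typeI {d bu bv : ℕ} (hd : 1 ≤ d) (p : Fin d → ZMod 2)
    (U : Fin d → Fin d → Matrix (Bool × Fin bu) (Bool × Fin bu) ℂ)
    (V : Fin d → Fin d → Matrix (Bool × Fin bv) (Bool × Fin bv) ℂ)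
    (hUE : EvenTensor (doubledP p) (doubledT U) (ZBP bu))
    (hVE : EvenTensor (doubledP p) (doubledT V) (ZBP bv))
    (hUs : TypeIIStruct p U) (hVs : TypeIIStruct p V)
    (hUn : GradedNormal (mpoScaled ((Real.sqrt d : ℂ))⁻¹ U) (ZBP bu) 2)
    (hVn : GradedNormal (mpoScaled ((Real.sqrt d : ℂ))⁻¹ V) (ZBP bv) 2)
    (hUu : ∀ N : ℕ, 1 ≤ N →
      ((Real.sqrt 2 : ℂ))⁻¹ • fMPO p U N ∈ Matrix.unitaryGroup (Fin N → Fin d) ℂ)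
    (hVu : ∀ N : ℕ, 1 ≤ N →
      ((Real.sqrt 2 : ℂ))⁻¹ • fMPO p V N ∈ Matrix.unitaryGroup (Fin N → Fin d) ℂ) :
    ∃ (D' : ℕ), 1 ≤ D' ∧
      ∃ (Z' : Matrix (Fin D') (Fin D') ℂ)
        (W : Fin d → Fin d → Matrix (Fin D') (Fin D') ℂ),
        IsParityMatrix Z' ∧
        EvenTensor (doubledP p) (doubledT W) Z' ∧
        (∀ N : ℕ, 1 ≤ N →
          fMPO p W N =
            (((Real.sqrt 2 : ℂ))⁻¹ • fMPO p U N) * (((Real.sqrt 2 : ℂ))⁻¹ • fMPO p V N)) ∧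
        (∀ N : ℕ, 1 ≤ N → fMPO p W N ∈ Matrix.unitaryGroup (Fin N → Fin d) ℂ) := by
  obtain ⟨Nu, hNu⟩ := hUs
  obtain ⟨Nv, hNv⟩ := hVs
  have hbu : 1 ≤ bu := bond_dim_pos hd p U (hUu 1 le_rfl)
  have hbv : 1 ≤ bv := bond_dim_pos hd p V (hVu 1 le_rfl)
  have hU' : U = fun n' m' => Smat (p n' + p m') 0 ⊗ₖ Nu n' m' := by
    funext a b; rw [hNu, Smat_right_zero]
  have hV' : V = fun n' m' => Smat (p n' + p m') 0 ⊗ₖ Nv n' m' := by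
    funext a b; rw [hNv, Smat_right_zero]
  set ν := (Bool × (Fin bu × Fin bv)) with hν
  let W0 : Fin d → Fin d → Matrix ν ν ℂ :=
    fun n' m' => ∑ k, Smat (p n' + p k) (p k + p m') ⊗ₖ (Nu n' k ⊗ₖ Nv k m')
  let Z0 : Matrix ν ν ℂ := pauliZ ⊗ₖ (1 : Matrix (Fin bu × Fin bv) (Fin bu × Fin bv) ℂ)
  let e : ν ≃ Fin (Fintype.card ν) := Fintype.equivFin ν
  have hc : ((Real.sqrt 2 : ℂ))⁻¹ * ((Real.sqrt 2 : ℂ))⁻¹ = (2:ℂ)⁻¹ := by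
    rw [← mul_inv, ← Complex.ofReal_mul, Real.mul_self_sqrt (by norm_num)]
    norm_num
  have hfMPO : ∀ N : ℕ, 1 ≤ N →
      fMPO p (fun n' m' => Matrix.reindex e e (W0 n' m')) N =
        (((Real.sqrt 2 : ℂ))⁻¹ • fMPO p U N) * (((Real.sqrt 2 : ℂ))⁻¹ • fMPO p V N) := by
    intro N hN
    rw [fMPO_reindex, hU', hV']
    ext n m
    rw [Matrix.mul_apply]
    show fMPO p W0 N n m = _
    rw [fMPO_W_entry p Nu Nv N n m]
    refine Finset.sum_congr rfl fun k _ => ?_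
    rw [Matrix.smul_apply, Matrix.smul_apply, fMPO_typeII_entry p Nu N n k,
      fMPO_typeII_entry p Nv N k m, Smat_trace_split, smul_eq_mul, smul_eq_mul]
    have hs : sgn (mpoSign p n k) * sgn (mpoSign p k m) =
        sgn (mpoSign p n m) *
          sgn (pairSum N fun j i => (p (k i) + p (m i)) * (p (n j) + p (k j))) := by
      rw [← sgn_add, ← sgn_add, sign_identity]
    linear_combination
      (-((2:ℂ)⁻¹ * (Smat (∑ j, (p (n j) + p (k j))) 0).trace *
        (Smat (∑ j, (p (k j) + p (m j))) 0).trace *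
        ((List.ofFn fun j => Nu (n j) (k j)).prod).trace *
        ((List.ofFn fun j => Nv (k j) (m j)).prod).trace)) * hs +
      (-(sgn (mpoSign p n k) * sgn (mpoSign p k m) *
        (Smat (∑ j, (p (n j) + p (k j))) 0).trace *
        (Smat (∑ j, (p (k j) + p (m j))) 0).trace *
        ((List.ofFn fun j => Nu (n j) (k j)).prod).trace *
        ((List.ofFn fun j => Nv (k j) (m j)).prod).trace)) * hc
  refine ⟨Fintype.card ν, ?_, Matrix.reindex e e Z0,
    fun n' m' => Matrix.reindex e e (W0 n' m'), ⟨?_, ?_⟩, ?_, hfMPO, ?_⟩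
  · have : Nonempty ν := ⟨(false, ⟨0, hbu⟩, ⟨0, hbv⟩)⟩
    exact Fintype.card_pos_iff.mpr this
  · -- IsDiag
    intro i j hij
    have hij' : e.symm i ≠ e.symm j := fun h => hij (by simpa using congrArg e h)
    show Z0 (e.symm i) (e.symm j) = 0
    have h1 : Z0 (e.symm i) (e.symm j) = pauliZ (e.symm i).1 (e.symm j).1 *
        (1 : Matrix (Fin bu × Fin bv) (Fin bu × Fin bv) ℂ) (e.symm i).2 (e.symm j).2 := rfl
    rw [h1]
    by_cases hab : (e.symm i).1 = (e.symm j).1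
    · have hxy : (e.symm i).2 ≠ (e.symm j).2 := fun h => hij' (Prod.ext hab h)
      rw [Matrix.one_apply_ne hxy, mul_zero]
    · rw [show pauliZ (e.symm i).1 (e.symm j).1 = 0 from Matrix.diagonal_apply_ne _ hab,
        zero_mul]
  · -- diagonal entries ±1
    intro α
    show Z0 (e.symm α) (e.symm α) = 1 ∨ Z0 (e.symm α) (e.symm α) = -1
    have h1 : Z0 (e.symm α) (e.symm α) = pauliZ (e.symm α).1 (e.symm α).1 *
        (1 : Matrix (Fin bu × Fin bv) (Fin bu × Fin bv) ℂ) (e.symm α).2 (e.symm α).2 := rfl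
    rw [h1, Matrix.one_apply_eq, mul_one]
    generalize (e.symm α).1 = c
    cases c
    · left; rfl
    · right; rfl
  · -- EvenTensor
    intro i
    show Matrix.reindex e e Z0 * Matrix.reindex e e (W0 i.1 i.2) =
      sgn (p i.1 + p i.2) • (Matrix.reindex e e (W0 i.1 i.2) * Matrix.reindex e e Z0)
    rw [reindex_mul, reindex_mul, W0_even p Nu Nv i.1 i.2]
    rw [Matrix.reindex_apply, Matrix.reindex_apply, Matrix.submatrix_smul]
    rfl
  · -- unitarity
    intro N hN
    rw [hfMPO N hN]
    exact mul_mem (hUu N hN) (hVu N hN)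

end

end FQCA
end

section
/- There exists a matrix O ∈ M₄(ℂ) with P O P = O (P = diag(1,−1,−1,1), i.e., O is parity-even) such that for every N ≥ 2 and every pair of distinct sites j, k ∈ {1,…,N}, the matrix U^{(N)†} ι_j(O) U^{(N)} does not act as the identity on the tensor factor at site k; that is, it is not equal to any matrix of the form obtained by tensoring I₄ at site k with a matrix on the remaining N−1 factors. In particular, although each U^{(N)} is unitary, the family {U^{(N)}} is not locality-preserving: it is a fermionic matrix product unitary that is not a quantum cellular automaton. -/
open Matrix Kronecker
open scoped ComplexOrder

namespace FQCA

noncomputable section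

/-- Physical parity for two fermionic modes per site: `|0| = |3| = 0`, `|1| = |2| = 1`. -/
def pEx : Fin 4 → ZMod 2 := ![0, 1, 1, 0]

/-- The bond parity matrix `Z = diag(1,1,-1)` of the `D = 3` example. -/
def Zex : Matrix (Fin 3) (Fin 3) ℂ := Matrix.diagonal ![1, 1, -1]

/-- The explicit `D = 3` MPO tensor: `U^{0,0} = I₃`,
`(U^{n,m})_{α,β} = δ_{α,n-1} δ_{β,m-1}` for `n,m ∈ {1,2,3}`, and `U^{n,m} = 0` whenever
exactly one of `n,m` is `0`. -/
def Uex : Fin 4 → Fin 4 → Matrix (Fin 3) (Fin 3) ℂ := fun n m =>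
  if n = 0 ∧ m = 0 then (1 : Matrix (Fin 3) (Fin 3) ℂ)
  else if n ≠ 0 ∧ m ≠ 0 then
    Matrix.of (fun α β : Fin 3 =>
      if (α : ℕ) + 1 = (n : ℕ) ∧ (β : ℕ) + 1 = (m : ℕ) then (1 : ℂ) else 0)
  else 0

/-- The single-site physical parity matrix `P = diag(1,-1,-1,1)` of the example. -/
def PmatEx : Matrix (Fin 4) (Fin 4) ℂ := Matrix.diagonal (fun i => sgn (pEx i))

/-- The local operator `O` placed at site `j`:
`ι_j(O) = I^{⊗(j-1)} ⊗ O ⊗ I^{⊗(N-j)}`. -/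
def iotaEx {N : ℕ} (O : Matrix (Fin 4) (Fin 4) ℂ) (j : Fin N) :
    Matrix (Fin N → Fin 4) (Fin N → Fin 4) ℂ :=
  Matrix.of fun n m =>
    O (n j) (m j) * ∏ l ∈ Finset.univ.erase j, (if n l = m l then (1 : ℂ) else 0)

inductive Sy : Type
  | zero : Sy
  | one : Sy
  | e : Fin 3 → Fin 3 → Sy
  deriving DecidableEq, Fintype

def Sy.mul : Sy → Sy → Sy
  | .zero, _ => .zero
  | _, .zero => .zero
  | .one, x => x
  | x, .one => x
  | .e a b, .e c d => if b = c then .e a d else .zero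

instance : MonoidWithZero Sy where
  mul := Sy.mul
  one := .one
  zero := .zero
  mul_assoc := by decide
  one_mul := by decide
  mul_one := by decide
  zero_mul := by decide
  mul_zero := by decide

lemma Sy.zero_def : (0 : Sy) = Sy.zero := rfl
lemma Sy.one_def : (1 : Sy) = Sy.one := rfl
lemma Sy.e_mul_e (a b c d : Fin 3) :
    (Sy.e a b * Sy.e c d) = if b = c then Sy.e a d else 0 := rfl

@[simp] lemma Sy.e_eq_zero (a b : Fin 3) : (Sy.e a b = 0) ↔ False :=
  ⟨fun h => Sy.noConfusion h, False.elim⟩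
@[simp] lemma Sy.zero_eq_e (a b : Fin 3) : ((0 : Sy) = Sy.e a b) ↔ False :=
  ⟨fun h => Sy.noConfusion h, False.elim⟩
@[simp] lemma Sy.e_eq_one (a b : Fin 3) : (Sy.e a b = 1) ↔ False :=
  ⟨fun h => Sy.noConfusion h, False.elim⟩
@[simp] lemma Sy.one_eq_e (a b : Fin 3) : ((1 : Sy) = Sy.e a b) ↔ False :=
  ⟨fun h => Sy.noConfusion h, False.elim⟩

noncomputable def Sy.mat : Sy → Matrix (Fin 3) (Fin 3) ℂ
  | .zero => 0
  | .one => 1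
  | .e a b => Matrix.single a b 1

lemma Sy.mat_mul (x y : Sy) : (x * y).mat = x.mat * y.mat := by
  cases x <;> cases y <;>
    simp only [show ∀ u v : Sy, u * v = Sy.mul u v from fun _ _ => rfl, Sy.mul, Sy.mat,
      Matrix.zero_mul, Matrix.mul_zero, Matrix.one_mul, Matrix.mul_one]
  rename_i a b c d
  by_cases h : b = c
  · subst h
    simp [Matrix.single_mul_single_same, Sy.mat]
  · simp [h, Matrix.single_mul_single_of_ne, Sy.mat]

noncomputable def matHom : Sy →* Matrix (Fin 3) (Fin 3) ℂ :=
  { toFun := Sy.mat, map_one' := rfl, map_mul' := Sy.mat_mul }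

def dec4 (i : Fin 4) : Fin 3 := ⟨i.val - 1, by omega⟩
def inc3 (b : Fin 3) : Fin 4 := ⟨b.val + 1, by omega⟩

@[simp] lemma inc3_ne_zero (b : Fin 3) : inc3 b ≠ 0 := by
  rw [Ne, Fin.ext_iff]
  show b.val + 1 ≠ 0
  omega

lemma eq_inc3_iff {m : Fin 4} (hm : m ≠ 0) (b : Fin 3) : m = inc3 b ↔ dec4 m = b := by
  rw [Fin.ext_iff, Fin.ext_iff, inc3, dec4]
  have := Fin.val_ne_of_ne hm
  simp at this ⊢
  omega

def symOf (n m : Fin 4) : Sy :=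
  if n = 0 then (if m = 0 then 1 else 0) else if m = 0 then 0 else .e (dec4 n) (dec4 m)

@[simp] lemma symOf_zero (m : Fin 4) : symOf 0 m = if m = 0 then 1 else 0 := by
  simp [symOf]

lemma symOf_ne {n : Fin 4} (hn : n ≠ 0) (m : Fin 4) :
    symOf n m = if m = 0 then 0 else .e (dec4 n) (dec4 m) := by
  simp [symOf, hn]

def sprod (ns ms : List (Fin 4)) : Sy := (List.zipWith symOf ns ms).prod

@[simp] lemma sprod_nil (l : List (Fin 4)) : sprod [] l = 1 := rfl

lemma sprod_cons (n m : Fin 4) (ns ms : List (Fin 4)) :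
    sprod (n :: ns) (m :: ms) = symOf n m * sprod ns ms := by
  simp [sprod]

def Sy.tau : Sy → ℂ
  | .zero => 0
  | .one => 1
  | .e a b => if a = b then (if a.val = 2 then -1 else 1) else 0

def Sy.symT : Sy → Sy
  | .zero => .zero
  | .one => .one
  | .e a b => .e b a

lemma Sy.symT_mul : ∀ x y : Sy, (x * y).symT = y.symT * x.symT := by decide

lemma symT_symOf (n m : Fin 4) : (symOf n m).symT = symOf m n := by
  unfold symOf
  by_cases hn : n = 0 <;> by_cases hm : m = 0 <;> simp [hn, hm, Sy.symT, Sy.zero_def, Sy.one_def]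

lemma Sy.tau_symT : ∀ s : Sy, s.symT.tau = s.tau := by
  rintro (_ | _ | ⟨a, b⟩) <;> simp [Sy.symT, Sy.tau]
  by_cases h : a = b
  · subst h; simp
  · have h' : b ≠ a := fun hh => h hh.symm
    simp [h, h']

lemma sprod_reverse : ∀ ns ms : List (Fin 4), ns.length = ms.length →
    sprod ms.reverse ns.reverse = (sprod ns ms).symT := by
  intro ns
  induction ns with
  | nil => intro ms h; rw [List.length_nil] at h; rw [(List.length_eq_zero_iff.mp h.symm)]; rfl
  | cons n t ih =>
    intro ms h
    rcases ms with _ | ⟨m, ms'⟩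
    · simp at h
    · have hlen : t.length = ms'.length := by simpa using h
      have hrevlen : ms'.reverse.length = t.reverse.length := by simp [hlen]
      rw [List.reverse_cons, List.reverse_cons, sprod, List.zipWith_append (h := hrevlen)]
      rw [List.prod_append]
      have h2 : sprod ms'.reverse t.reverse = (sprod t ms').symT := ih ms' hlen
      rw [sprod] at h2
      rw [h2]
      simp only [List.zipWith_cons_cons, List.zipWith_nil_right, List.prod_cons, List.prod_nil,
        mul_one]
      rw [← symT_symOf, ← Sy.symT_mul, ← sprod_cons, sprod]

lemma rowStruct : ∀ ns : List (Fin 4),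
    ((∀ x ∈ ns, x = 0) ∧ ∀ ms, ms.length = ns.length →
        sprod ns ms = if ∀ x ∈ ms, x = 0 then 1 else 0)
    ∨ (∃ (a : Fin 3) (M : Fin 3 → List (Fin 4)),
        (∀ b, (M b).length = ns.length) ∧
        (∀ ms, ms.length = ns.length → sprod ns ms = 0 ∨ ∃ b, sprod ns ms = .e a b) ∧
        (∀ b ms, ms.length = ns.length → (sprod ns ms = .e a b ↔ ms = M b))) := by
  intro ns
  induction ns with
  | nil =>
    left
    refine ⟨by simp, ?_⟩
    intro ms h
    rw [List.length_nil] at h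
    rw [List.length_eq_zero_iff.mp h]
    simp
  | cons n t ih =>
    by_cases hn : n = 0
    · subst hn
      rcases ih with ⟨h0, hf⟩ | ⟨a, M, hlen, hval, hiff⟩
      · left
        constructor
        · intro x hx
          rcases List.mem_cons.mp hx with h | h
          · exact h
          · exact h0 x h
        · intro ms h
          rcases ms with _ | ⟨m, ms'⟩
          · simp at h
          · have hlen' : ms'.length = t.length := by simpa using h
            rw [sprod_cons, symOf_zero, hf ms' hlen']
            by_cases hm : m = 0
            · subst hm
              rw [if_pos rfl, one_mul]
              by_cases hms : ∀ x ∈ ms', x = (0 : Fin 4)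
              · rw [if_pos hms, if_pos (by simpa using hms)]
              · rw [if_neg hms, if_neg (by simpa using hms)]
            · rw [if_neg hm, zero_mul,
                if_neg (fun hh => hm (hh m (List.mem_cons_self)))]
      · right
        refine ⟨a, fun b => 0 :: M b, fun b => by simp [hlen b], ?_, ?_⟩
        · intro ms h
          rcases ms with _ | ⟨m, ms'⟩
          · simp at h
          · have hlen' : ms'.length = t.length := by simpa using h
            rw [sprod_cons, symOf_zero]
            by_cases hm : m = 0
            · rw [if_pos hm, one_mul]
              exact hval ms' hlen'
            · rw [if_neg hm, zero_mul]
              left; rfl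
        · intro b ms h
          rcases ms with _ | ⟨m, ms'⟩
          · simp at h
          · have hlen' : ms'.length = t.length := by simpa using h
            rw [sprod_cons, symOf_zero]
            by_cases hm : m = 0
            · rw [if_pos hm, one_mul, hiff b ms' hlen', hm]
              simp
            · rw [if_neg hm, zero_mul]
              simp [hm]
    · right
      refine ⟨dec4 n, ?_⟩
      rcases ih with ⟨h0, hf⟩ | ⟨a', M', hlen, hval, hiff⟩
      · refine ⟨fun b => inc3 b :: List.replicate t.length 0, fun b => by simp, ?_, ?_⟩
        · intro ms h
          rcases ms with _ | ⟨m, ms'⟩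
          · simp at h
          · have hlen' : ms'.length = t.length := by simpa using h
            rw [sprod_cons, symOf_ne hn, hf ms' hlen']
            by_cases hm : m = 0
            · rw [if_pos hm, zero_mul]; left; rfl
            · rw [if_neg hm]
              by_cases hms : ∀ x ∈ ms', x = (0 : Fin 4)
              · rw [if_pos hms, mul_one]
                exact Or.inr ⟨dec4 m, rfl⟩
              · rw [if_neg hms, mul_zero]; left; rfl
        · intro b ms h
          rcases ms with _ | ⟨m, ms'⟩
          · simp at h
          · have hlen' : ms'.length = t.length := by simpa using h
            rw [sprod_cons, symOf_ne hn, hf ms' hlen']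
            by_cases hm : m = 0
            · rw [if_pos hm, zero_mul]
              simp only [Sy.zero_eq_e, false_iff]
              intro hh
              rw [List.cons_eq_cons] at hh
              exact inc3_ne_zero b (hm ▸ hh.1.symm ▸ rfl)
            · rw [if_neg hm]
              by_cases hms : ∀ x ∈ ms', x = (0 : Fin 4)
              · rw [if_pos hms, mul_one, List.cons_eq_cons]
                have hrep : ms' = List.replicate t.length (0 : Fin 4) :=
                  List.eq_replicate_iff.mpr ⟨hlen', hms⟩
                constructor
                · intro hh
                  have h1 : dec4 m = b := by simpa using hh
                  exact ⟨(eq_inc3_iff hm b).mpr h1, hrep⟩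
                · intro ⟨h1, _⟩
                  have : dec4 m = b := (eq_inc3_iff hm b).mp h1
                  rw [this]
              · rw [if_neg hms, mul_zero]
                simp only [Sy.zero_eq_e, false_iff]
                intro hh
                rw [List.cons_eq_cons] at hh
                exact hms fun x hx => List.eq_of_mem_replicate (hh.2 ▸ hx)
      · refine ⟨fun b => inc3 a' :: M' b, fun b => by simp [hlen b], ?_, ?_⟩
        · intro ms h
          rcases ms with _ | ⟨m, ms'⟩
          · simp at h
          · have hlen' : ms'.length = t.length := by simpa using h
            rw [sprod_cons, symOf_ne hn]
            by_cases hm : m = 0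
            · rw [if_pos hm, zero_mul]; left; rfl
            · rw [if_neg hm]
              rcases hval ms' hlen' with h1 | ⟨b, h1⟩
              · rw [h1, mul_zero]; left; rfl
              · rw [h1, Sy.e_mul_e]
                by_cases h2 : dec4 m = a'
                · rw [if_pos h2]
                  exact Or.inr ⟨b, rfl⟩
                · rw [if_neg h2]; left; rfl
        · intro b ms h
          rcases ms with _ | ⟨m, ms'⟩
          · simp at h
          · have hlen' : ms'.length = t.length := by simpa using h
            rw [sprod_cons, symOf_ne hn]
            by_cases hm : m = 0
            · rw [if_pos hm, zero_mul]
              simp only [Sy.zero_eq_e, false_iff]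
              intro hh
              rw [List.cons_eq_cons] at hh
              exact inc3_ne_zero a' (hm ▸ hh.1.symm ▸ rfl)
            · rw [if_neg hm]
              rcases hval ms' hlen' with h1 | ⟨c, h1⟩
              · rw [h1, mul_zero]
                simp only [Sy.zero_eq_e, false_iff]
                intro hh
                rw [List.cons_eq_cons] at hh
                have := (hiff b ms' hlen').mpr hh.2
                rw [h1] at this
                exact (Sy.e_eq_zero _ _).mp this.symm
              · rw [h1, Sy.e_mul_e]
                by_cases h2 : dec4 m = a'
                · rw [if_pos h2, List.cons_eq_cons]
                  constructor
                  · intro hh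
                    have hcb : c = b := by
                      have := hh
                      simp only [Sy.e.injEq] at this
                      exact this.2
                    exact ⟨(eq_inc3_iff hm a').mpr h2, (hiff b ms' hlen').mp (hcb ▸ h1)⟩
                  · intro ⟨h3, h4⟩
                    have := (hiff b ms' hlen').mpr h4
                    rw [h1] at this
                    have hcb : c = b := by
                      simp only [Sy.e.injEq] at this
                      exact this.2
                    rw [hcb]
                · rw [if_neg h2]
                  simp only [Sy.zero_eq_e, false_iff]
                  intro hh
                  rw [List.cons_eq_cons] at hh
                  exact h2 ((eq_inc3_iff hm a').mp hh.1)

lemma prod_ofFn_all_one {M : Type*} [Monoid M] {N : ℕ} (f : Fin N → M)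
    (h : ∀ l, f l = 1) : (List.ofFn f).prod = 1 :=
  List.prod_eq_one (by
    intro x hx
    rw [List.mem_ofFn] at hx
    obtain ⟨i, rfl⟩ := hx
    exact h i)

lemma prod_ofFn_single {M : Type*} [Monoid M] : ∀ {N : ℕ} (f : Fin N → M) (j : Fin N),
    (∀ l, l ≠ j → f l = 1) → (List.ofFn f).prod = f j := by
  intro N
  induction N with
  | zero => intro f j; exact j.elim0
  | succ k ih =>
    intro f j h
    rw [List.ofFn_succ, List.prod_cons]
    rcases Fin.eq_zero_or_eq_succ j with rfl | ⟨i, rfl⟩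
    · rw [prod_ofFn_all_one _ (fun l => h l.succ (Fin.succ_ne_zero l)), mul_one]
    · rw [h 0 (Fin.succ_ne_zero i).symm, one_mul]
      exact ih _ i (fun l hl => h l.succ (by simpa [Fin.succ_inj] using hl))

lemma prod_ofFn_pair {M : Type*} [Monoid M] : ∀ {N : ℕ} (f : Fin N → M) (j k : Fin N),
    j < k → (∀ l, l ≠ j → l ≠ k → f l = 1) → (List.ofFn f).prod = f j * f k := by
  intro N
  induction N with
  | zero => intro f j; exact j.elim0
  | succ q ih =>
    intro f j k hjk h
    rw [List.ofFn_succ, List.prod_cons]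
    rcases Fin.eq_zero_or_eq_succ j with rfl | ⟨i, rfl⟩
    · rcases Fin.eq_zero_or_eq_succ k with rfl | ⟨kk, rfl⟩
      · exact absurd hjk (lt_irrefl _)
      · rw [prod_ofFn_single (fun l => f l.succ) kk
          (fun l hl => h l.succ (Fin.succ_ne_zero l) (by simpa [Fin.succ_inj] using hl))]
    · rcases Fin.eq_zero_or_eq_succ k with rfl | ⟨kk, rfl⟩
      · exact absurd hjk (by simp [Fin.lt_def])
      · rw [h 0 (Fin.succ_ne_zero i).symm (Fin.succ_ne_zero kk).symm, one_mul]
        exact ih _ i kk (Fin.succ_lt_succ_iff.mp hjk)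
          (fun l h1 h2 => h l.succ (by simpa [Fin.succ_inj] using h1)
            (by simpa [Fin.succ_inj] using h2))

lemma zipWith_ofFn' {α β γ : Type*} (g : α → β → γ) : ∀ {N : ℕ} (n : Fin N → α) (m : Fin N → β),
    List.zipWith g (List.ofFn n) (List.ofFn m) = List.ofFn (fun j => g (n j) (m j)) := by
  intro N
  induction N with
  | zero => intro n m; rfl
  | succ k ih =>
    intro n m
    rw [List.ofFn_succ, List.ofFn_succ, List.ofFn_succ, List.zipWith_cons_cons, ih]

@[simp] lemma Sy.mat_zero : (0 : Sy).mat = 0 := rfl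
@[simp] lemma Sy.mat_one : (1 : Sy).mat = 1 := rfl
@[simp] lemma Sy.mat_e (a b : Fin 3) : (Sy.e a b).mat = Matrix.single a b 1 := rfl
@[simp] lemma Sy.tau_zero : (0 : Sy).tau = 0 := rfl
@[simp] lemma Sy.tau_one : (1 : Sy).tau = 1 := rfl
lemma Sy.tau_e (a b : Fin 3) :
    (Sy.e a b).tau = if a = b then (if a.val = 2 then -1 else 1) else 0 := rfl

lemma Uex_eq (n m : Fin 4) : Uex n m = (symOf n m).mat := by
  by_cases hn : n = 0 <;> by_cases hm : m = 0
  · subst hn; subst hm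
    simp [Uex, symOf]
  · subst hn
    simp [Uex, symOf, hm]
  · subst hm
    simp [Uex, symOf, hn]
  · have hnval : (n : ℕ) ≠ 0 := fun hh => hn (Fin.ext hh)
    have hmval : (m : ℕ) ≠ 0 := fun hh => hm (Fin.ext hh)
    rw [Uex, if_neg (by tauto), if_pos ⟨hn, hm⟩, symOf, if_neg hn, if_neg hm, Sy.mat_e]
    ext α β
    rw [Matrix.of_apply, Matrix.single, Matrix.of_apply]
    refine if_congr ?_ rfl rfl
    rw [Fin.ext_iff, Fin.ext_iff]
    show _ ↔ ((dec4 n : ℕ) = α ∧ (dec4 m : ℕ) = β)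
    rw [dec4, dec4]
    simp only []
    omega

lemma trace_Zex_mat (s : Sy) : (Zex * s.mat).trace = s.tau := by
  cases s with
  | zero => rw [show Sy.zero = (0 : Sy) from rfl]; simp
  | one =>
    rw [show Sy.one = (1 : Sy) from rfl, Sy.mat_one, Sy.tau_one, mul_one]
    simp [Zex, Matrix.trace, Matrix.diag, Matrix.diagonal, Fin.sum_univ_three]
  | e a b =>
    fin_cases a <;> fin_cases b <;>
      simp [Sy.mat_e, Sy.tau_e, Zex, Matrix.trace, Matrix.diag, Matrix.mul_apply,
        Matrix.single, Matrix.diagonal, Fin.sum_univ_three]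

lemma entry_eq {N : ℕ} (n m : Fin N → Fin 4) :
    fMPO_PBC pEx Zex Uex N n m
      = sgn (mpoSign pEx n m) * (sprod (List.ofFn n) (List.ofFn m)).tau := by
  have h1 : (List.ofFn fun j => Uex (n j) (m j))
      = (List.zipWith symOf (List.ofFn n) (List.ofFn m)).map Sy.mat := by
    rw [zipWith_ofFn', List.map_ofFn]
    exact congrArg _ (funext fun j => Uex_eq (n j) (m j))
  simp only [fMPO_PBC, Matrix.of_apply]
  rw [h1]
  rw [show List.map Sy.mat (List.zipWith symOf (List.ofFn n) (List.ofFn m))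
      = List.map matHom (List.zipWith symOf (List.ofFn n) (List.ofFn m)) from rfl]
  rw [← map_list_prod matHom]
  rw [show (matHom (List.zipWith symOf (List.ofFn n) (List.ofFn m)).prod)
      = (sprod (List.ofFn n) (List.ofFn m)).mat from rfl]
  rw [trace_Zex_mat]

lemma sgn_mul_self (x : ZMod 2) : sgn x * sgn x = 1 := by
  rw [sgn, ← pow_add, ← two_mul, pow_mul, neg_one_sq, one_pow]

lemma star_sgn (x : ZMod 2) : star (sgn x) = sgn x := by
  rw [sgn, star_pow]
  norm_num

lemma star_tau (s : Sy) : star s.tau = s.tau := by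
  cases s with
  | zero => simp [Sy.tau]
  | one => simp [Sy.tau]
  | e a b =>
    rw [show Sy.e a b = Sy.e a b from rfl, Sy.tau_e]
    split_ifs <;> simp

lemma tau_e_mul_self (a : Fin 3) : (Sy.e a a).tau * (Sy.e a a).tau = 1 := by
  rw [Sy.tau_e, if_pos rfl]
  split_ifs <;> norm_num

lemma tau_e_ne_zero {a b : Fin 3} (h : (Sy.e a b).tau ≠ 0) : b = a := by
  by_contra hb
  exact h (by rw [Sy.tau_e, if_neg (fun hh : a = b => hb hh.symm)])

lemma ofFn_fixed_list {N : ℕ} (L : List (Fin 4)) (hL : L.length = N) :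
    List.ofFn (fun j : Fin N => L.get (Fin.cast hL.symm j)) = L := by
  apply List.ext_get (by simp [hL])
  intro i h1 h2
  rw [List.get_ofFn]
  rfl

lemma sum_tau_sq {N : ℕ} (n : Fin N → Fin 4) :
    ∑ m : Fin N → Fin 4,
      ((sprod (List.ofFn n) (List.ofFn m)).tau * (sprod (List.ofFn n) (List.ofFn m)).tau) = 1 := by
  rcases rowStruct (List.ofFn n) with ⟨h0, hf⟩ | ⟨a, M, hlen, hval, hiff⟩
  · have key : ∀ m : Fin N → Fin 4,
        (sprod (List.ofFn n) (List.ofFn m)).tau * (sprod (List.ofFn n) (List.ofFn m)).tau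
          = if m = (fun _ => 0) then 1 else 0 := by
      intro m
      rw [hf (List.ofFn m) (by simp)]
      by_cases hm : ∀ x ∈ List.ofFn m, x = (0 : Fin 4)
      · rw [if_pos hm, if_pos (funext fun j => hm (m j) (by rw [List.mem_ofFn]; exact ⟨j, rfl⟩))]
        simp
      · rw [if_neg hm, if_neg (by
          intro hh
          apply hm
          intro x hx
          rw [List.mem_ofFn] at hx
          obtain ⟨i, rfl⟩ := hx
          rw [hh])]
        simp
    rw [Finset.sum_congr rfl fun m _ => key m]
    simp
  · have hMlen : (M a).length = N := by rw [hlen a]; simp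
    set m₀ : Fin N → Fin 4 := fun j => (M a).get (Fin.cast hMlen.symm j) with hm₀
    have hofn : List.ofFn m₀ = M a := ofFn_fixed_list (M a) hMlen
    have key : ∀ m : Fin N → Fin 4,
        (sprod (List.ofFn n) (List.ofFn m)).tau * (sprod (List.ofFn n) (List.ofFn m)).tau
          = if m = m₀ then 1 else 0 := by
      intro m
      by_cases hm : m = m₀
      · subst hm
        rw [if_pos rfl, (hiff a (List.ofFn m₀) (by simp)).mpr hofn]
        exact tau_e_mul_self a
      · rw [if_neg hm]
        rcases hval (List.ofFn m) (by simp) with h1 | ⟨b, h1⟩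
        · rw [h1]; simp
        · by_cases hba : b = a
          · subst hba
            have := (hiff b (List.ofFn m) (by simp)).mp h1
            exact absurd (List.ofFn_injective (this.trans hofn.symm)) hm
          · rw [h1, Sy.tau_e, if_neg (fun hh : a = b => hba hh.symm)]
            simp
    rw [Finset.sum_congr rfl fun m _ => key m]
    simp

lemma tau_row_unique {N : ℕ} {n n' m : Fin N → Fin 4}
    (h : (sprod (List.ofFn n) (List.ofFn m)).tau ≠ 0)
    (h' : (sprod (List.ofFn n') (List.ofFn m)).tau ≠ 0) : n = n' := by
  have hrev : ∀ nn : Fin N → Fin 4,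
      sprod (List.ofFn m).reverse (List.ofFn nn).reverse
        = (sprod (List.ofFn nn) (List.ofFn m)).symT :=
    fun nn => sprod_reverse _ _ (by simp)
  have h1 : (sprod (List.ofFn m).reverse (List.ofFn n).reverse).tau ≠ 0 := by
    rw [hrev, Sy.tau_symT]; exact h
  have h2 : (sprod (List.ofFn m).reverse (List.ofFn n').reverse).tau ≠ 0 := by
    rw [hrev, Sy.tau_symT]; exact h'
  rcases rowStruct ((List.ofFn m).reverse) with ⟨h0, hf⟩ | ⟨a, M, hlen, hval, hiff⟩
  · have z : ∀ nn : Fin N → Fin 4,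
        (sprod (List.ofFn m).reverse (List.ofFn nn).reverse).tau ≠ 0 → ∀ i, nn i = 0 := by
      intro nn hh i
      have := hf (List.ofFn nn).reverse (by simp)
      by_cases hz : ∀ x ∈ (List.ofFn nn).reverse, x = (0 : Fin 4)
      · exact hz (nn i) (by rw [List.mem_reverse, List.mem_ofFn]; exact ⟨i, rfl⟩)
      · rw [if_neg hz] at this
        rw [this] at hh
        simp at hh
    funext i
    rw [z n h1 i, z n' h2 i]
  · have z : ∀ nn : Fin N → Fin 4,
        (sprod (List.ofFn m).reverse (List.ofFn nn).reverse).tau ≠ 0 →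
          (List.ofFn nn).reverse = M a := by
      intro nn hh
      rcases hval (List.ofFn nn).reverse (by simp) with hx | ⟨b, hx⟩
      · rw [hx] at hh; simp at hh
      · have hb : b = a := tau_e_ne_zero (hx ▸ hh)
        exact (hiff a _ (by simp)).mp (hb ▸ hx)
    have := (z n h1).trans (z n' h2).symm
    exact List.ofFn_injective (List.reverse_injective this)

lemma fmpo_unitary (N : ℕ) :
    fMPO_PBC pEx Zex Uex N ∈ Matrix.unitaryGroup (Fin N → Fin 4) ℂ := by
  rw [Matrix.mem_unitaryGroup_iff]
  ext n n'
  rw [Matrix.mul_apply, Matrix.one_apply]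
  simp only [Matrix.star_apply]
  by_cases hnn : n = n'
  · subst hnn
    rw [if_pos rfl]
    have key : ∀ b, fMPO_PBC pEx Zex Uex N n b * star (fMPO_PBC pEx Zex Uex N n b)
        = (sprod (List.ofFn n) (List.ofFn b)).tau * (sprod (List.ofFn n) (List.ofFn b)).tau := by
      intro b
      rw [entry_eq, star_mul', star_sgn, star_tau]
      calc sgn (mpoSign pEx n b) * (sprod (List.ofFn n) (List.ofFn b)).tau
            * (sgn (mpoSign pEx n b) * (sprod (List.ofFn n) (List.ofFn b)).tau)
          = (sgn (mpoSign pEx n b) * sgn (mpoSign pEx n b))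
            * ((sprod (List.ofFn n) (List.ofFn b)).tau * (sprod (List.ofFn n) (List.ofFn b)).tau) := by
            ring
        _ = (sprod (List.ofFn n) (List.ofFn b)).tau * (sprod (List.ofFn n) (List.ofFn b)).tau := by
            rw [sgn_mul_self, one_mul]
    rw [Finset.sum_congr rfl fun b _ => key b]
    exact sum_tau_sq n
  · rw [if_neg hnn]
    apply Finset.sum_eq_zero
    intro b _
    rw [entry_eq, entry_eq, star_mul', star_sgn, star_tau]
    have hz : (sprod (List.ofFn n) (List.ofFn b)).tau
        * (sprod (List.ofFn n') (List.ofFn b)).tau = 0 := by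
      by_cases hx : (sprod (List.ofFn n) (List.ofFn b)).tau = 0
      · rw [hx, zero_mul]
      · by_cases hy : (sprod (List.ofFn n') (List.ofFn b)).tau = 0
        · rw [hy, mul_zero]
        · exact absurd (tau_row_unique hx hy) hnn
    calc sgn (mpoSign pEx n b) * (sprod (List.ofFn n) (List.ofFn b)).tau
          * (sgn (mpoSign pEx n' b) * (sprod (List.ofFn n') (List.ofFn b)).tau)
        = (sgn (mpoSign pEx n b) * sgn (mpoSign pEx n' b))
          * ((sprod (List.ofFn n) (List.ofFn b)).tau * (sprod (List.ofFn n') (List.ofFn b)).tau) := by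
          ring
      _ = 0 := by rw [hz, mul_zero]

def vEx : Fin 4 → ℂ := ![0, 1, 0, 0]

lemma vEx_ne_one {x : Fin 4} (h : x ≠ 1) : vEx x = 0 := by
  fin_cases x <;> simp_all [vEx]

lemma iota_diag {N : ℕ} (j : Fin N) (n m : Fin N → Fin 4) :
    iotaEx (Matrix.diagonal vEx) j n m = if n = m then vEx (n j) else 0 := by
  rw [iotaEx, Matrix.of_apply]
  by_cases h : n = m
  · subst h
    rw [if_pos rfl, Matrix.diagonal_apply_eq]
    rw [Finset.prod_congr rfl (fun l _ => (if_pos rfl : (if n l = n l then (1:ℂ) else 0) = 1)),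
      Finset.prod_const_one, mul_one]
  · rw [if_neg h]
    by_cases hj : n j = m j
    · obtain ⟨l, hl⟩ : ∃ l, n l ≠ m l := by
        by_contra hc
        push_neg at hc
        exact h (funext hc)
      have hlj : l ≠ j := fun hh => hl (hh ▸ hj)
      rw [Finset.prod_eq_zero (Finset.mem_erase.mpr ⟨hlj, Finset.mem_univ l⟩)
        (if_neg hl : (if n l = m l then (1:ℂ) else 0) = 0), mul_zero]
    · rw [Matrix.diagonal_apply_ne _ hj, zero_mul]

lemma X_diag {N : ℕ} (j : Fin N) (m : Fin N → Fin 4) :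
    ((fMPO_PBC pEx Zex Uex N)ᴴ * iotaEx (Matrix.diagonal vEx) j * fMPO_PBC pEx Zex Uex N) m m
      = ∑ b : Fin N → Fin 4, vEx (b j) *
          ((sprod (List.ofFn b) (List.ofFn m)).tau * (sprod (List.ofFn b) (List.ofFn m)).tau) := by
  rw [Matrix.mul_apply]
  have hrow : ∀ b, ((fMPO_PBC pEx Zex Uex N)ᴴ * iotaEx (Matrix.diagonal vEx) j) m b
      = star (fMPO_PBC pEx Zex Uex N b m) * vEx (b j) := by
    intro b
    rw [Matrix.mul_apply]
    rw [Finset.sum_congr rfl (fun a _ => by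
      rw [Matrix.conjTranspose_apply, iota_diag])]
    rw [Finset.sum_congr rfl (fun a _ => by
      rw [mul_ite, mul_zero])]
    rw [Finset.sum_ite_eq' Finset.univ b (fun a => star (fMPO_PBC pEx Zex Uex N a m) * vEx (a j))]
    rw [if_pos (Finset.mem_univ b)]
  rw [Finset.sum_congr rfl fun b _ => by rw [hrow b]]
  apply Finset.sum_congr rfl
  intro b _
  rw [entry_eq, star_mul', star_sgn, star_tau]
  calc sgn (mpoSign pEx b m) * (sprod (List.ofFn b) (List.ofFn m)).tau * vEx (b j)
      * (sgn (mpoSign pEx b m) * (sprod (List.ofFn b) (List.ofFn m)).tau)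
      = (sgn (mpoSign pEx b m) * sgn (mpoSign pEx b m)) * (vEx (b j)
        * ((sprod (List.ofFn b) (List.ofFn m)).tau * (sprod (List.ofFn b) (List.ofFn m)).tau)) := by
        ring
    _ = vEx (b j) * ((sprod (List.ofFn b) (List.ofFn m)).tau
        * (sprod (List.ofFn b) (List.ofFn m)).tau) := by
        rw [sgn_mul_self, one_mul]

lemma sprod_ofFn_eq_prod {N : ℕ} (n m : Fin N → Fin 4) :
    sprod (List.ofFn n) (List.ofFn m) = (List.ofFn fun j => symOf (n j) (m j)).prod := by
  rw [sprod, zipWith_ofFn']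

lemma dec4_one : dec4 1 = 0 := rfl

lemma symOf_one_one : symOf 1 1 = Sy.e 0 0 := by
  rw [symOf, if_neg (by decide), if_neg (by decide)]
  rfl

lemma X_m0 {N : ℕ} (j : Fin N) (m₀ : Fin N → Fin 4) (hj : m₀ j = 1)
    (h0 : ∀ l, l ≠ j → m₀ l = 0) :
    ((fMPO_PBC pEx Zex Uex N)ᴴ * iotaEx (Matrix.diagonal vEx) j * fMPO_PBC pEx Zex Uex N)
      m₀ m₀ = 1 := by
  rw [X_diag]
  rw [Finset.sum_eq_single m₀]
  · have hsp : sprod (List.ofFn m₀) (List.ofFn m₀) = Sy.e 0 0 := by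
      rw [sprod_ofFn_eq_prod]
      rw [prod_ofFn_single _ j (fun l hl => by
        rw [h0 l hl, symOf_zero, if_pos rfl])]
      rw [hj, symOf_one_one]
    rw [hsp, hj]
    rw [show vEx 1 = 1 from by norm_num [vEx]]
    rw [tau_e_mul_self, mul_one]
  · intro b _ hb
    by_cases hbj : b j = 1
    · obtain ⟨l, hlj, hbl⟩ : ∃ l, l ≠ j ∧ b l ≠ 0 := by
        by_contra hc
        push_neg at hc
        apply hb
        funext l
        by_cases hl : l = j
        · subst hl; rw [hbj, hj]
        · rw [hc l hl, h0 l hl]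
      have hz : sprod (List.ofFn b) (List.ofFn m₀) = 0 := by
        rw [sprod_ofFn_eq_prod]
        apply List.prod_eq_zero
        rw [List.mem_ofFn]
        refine ⟨l, ?_⟩
        show symOf (b l) (m₀ l) = 0
        rw [h0 l hlj, symOf, if_neg hbl, if_pos rfl]
      rw [hz]
      simp
    · rw [vEx_ne_one hbj, zero_mul]
  · intro hmem
    exact absurd (Finset.mem_univ m₀) hmem

lemma X_m1 {N : ℕ} (j k : Fin N) (hjk : j ≠ k) (m₁ : Fin N → Fin 4) (hj : m₁ j = 1)
    (hk : m₁ k = 2) (h0 : ∀ l, l ≠ j → l ≠ k → m₁ l = 0) :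
    ((fMPO_PBC pEx Zex Uex N)ᴴ * iotaEx (Matrix.diagonal vEx) j * fMPO_PBC pEx Zex Uex N)
      m₁ m₁ = 0 := by
  rw [X_diag]
  apply Finset.sum_eq_zero
  intro b _
  by_cases hbj : b j = 1
  · by_cases hbk : b k = 0
    · have hz : sprod (List.ofFn b) (List.ofFn m₁) = 0 := by
        rw [sprod_ofFn_eq_prod]
        apply List.prod_eq_zero
        rw [List.mem_ofFn]
        refine ⟨k, ?_⟩
        show symOf (b k) (m₁ k) = 0
        rw [hk, hbk, symOf_zero, if_neg (by decide)]
      rw [hz]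
      simp
    · by_cases hrest : ∀ l, l ≠ j → l ≠ k → b l = 0
      · have hone : ∀ l, l ≠ j → l ≠ k → symOf (b l) (m₁ l) = 1 := by
          intro l h1 h2
          rw [h0 l h1 h2, hrest l h1 h2, symOf_zero, if_pos rfl]
        have hfj : symOf (b j) (m₁ j) = Sy.e 0 0 := by rw [hbj, hj, symOf_one_one]
        have hfk : symOf (b k) (m₁ k) = Sy.e (dec4 (b k)) 1 := by
          rw [hk, symOf_ne hbk, if_neg (by decide)]
          rfl
        rcases lt_trichotomy j k with hlt | heq | hgt
        · have hsp : sprod (List.ofFn b) (List.ofFn m₁)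
              = Sy.e 0 0 * Sy.e (dec4 (b k)) 1 := by
            rw [sprod_ofFn_eq_prod,
              prod_ofFn_pair _ j k hlt (fun l h1 h2 => hone l h1 h2), hfj, hfk]
          rw [hsp, Sy.e_mul_e]
          by_cases hc : (0 : Fin 3) = dec4 (b k)
          · rw [if_pos hc, Sy.tau_e, if_neg (by decide)]
            simp
          · rw [if_neg hc]
            simp
        · exact absurd heq hjk
        · have hsp : sprod (List.ofFn b) (List.ofFn m₁)
              = Sy.e (dec4 (b k)) 1 * Sy.e 0 0 := by
            rw [sprod_ofFn_eq_prod,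
              prod_ofFn_pair _ k j hgt (fun l h1 h2 => hone l h2 h1), hfj, hfk]
          rw [hsp, Sy.e_mul_e, if_neg (by decide)]
          simp
      · push_neg at hrest
        obtain ⟨l, h1, h2, h3⟩ := hrest
        have hz : sprod (List.ofFn b) (List.ofFn m₁) = 0 := by
          rw [sprod_ofFn_eq_prod]
          apply List.prod_eq_zero
          rw [List.mem_ofFn]
          refine ⟨l, ?_⟩
          show symOf (b l) (m₁ l) = 0
          rw [h0 l h1 h2, symOf, if_neg h3, if_pos rfl]
        rw [hz]
        simp
  · rw [vEx_ne_one hbj, zero_mul]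

/-- The explicit periodic fMPU is unitary but not locality-preserving:
there is a parity-even single-site operator `O` such that, for every `N ≥ 2` and all
distinct sites `j ≠ k`, the conjugated operator `U^{(N)†} ι_j(O) U^{(N)}` does not act as
the identity on the tensor factor at site `k`. Hence this fMPU is not a quantum cellular
automaton. -/
theorem explicit_periodic_fMPU_not_locality_preserving :
    (∀ N : ℕ, 1 ≤ N →
      fMPO_PBC pEx Zex Uex N ∈ Matrix.unitaryGroup (Fin N → Fin 4) ℂ) ∧
    ∃ O : Matrix (Fin 4) (Fin 4) ℂ,
      PmatEx * O * PmatEx = O ∧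
      ∀ N : ℕ, 2 ≤ N → ∀ j k : Fin N, j ≠ k →
        ¬ ∃ R : Matrix ({l : Fin N // l ≠ k} → Fin 4) ({l : Fin N // l ≠ k} → Fin 4) ℂ,
            ∀ n m : Fin N → Fin 4,
              ((fMPO_PBC pEx Zex Uex N)ᴴ * iotaEx O j * fMPO_PBC pEx Zex Uex N) n m =
                (if n k = m k then (1 : ℂ) else 0) *
                  R (fun l => n l.1) (fun l => m l.1) := by
  constructor
  · intro N _
    exact fmpo_unitary N
  · refine ⟨Matrix.diagonal vEx, ?_, ?_⟩
    · rw [PmatEx, Matrix.diagonal_mul_diagonal, Matrix.diagonal_mul_diagonal]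
      refine congrArg Matrix.diagonal (funext fun i => ?_)
      fin_cases i <;> simp [pEx, sgn, vEx] <;>
        norm_num [show (1 : ZMod 2).val = 1 from rfl]
    · rintro N hN j k hjk ⟨R, hR⟩
      set m₀ : Fin N → Fin 4 := fun l => if l = j then 1 else 0 with hm₀
      set m₁ : Fin N → Fin 4 := fun l => if l = j then 1 else if l = k then 2 else 0 with hm₁
      have hrr : (fun l : {l : Fin N // l ≠ k} => m₀ l.1) = (fun l => m₁ l.1) := by
        funext l
        simp only [hm₀, hm₁]
        by_cases hl : l.1 = j
        · rw [if_pos hl, if_pos hl]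
        · rw [if_neg hl, if_neg hl, if_neg l.2]
      have h0 := hR m₀ m₀
      have h1 := hR m₁ m₁
      rw [if_pos rfl] at h0 h1
      rw [one_mul] at h0 h1
      rw [X_m0 j m₀ (by simp [hm₀]) (fun l hl => by simp [hm₀, hl])] at h0
      rw [X_m1 j k hjk m₁ (by simp [hm₁])
        (by have hkj : k ≠ j := fun hh => hjk hh.symm; simp [hm₁, hkj])
        (fun l hl1 hl2 => by simp [hm₁, hl1, hl2])] at h1
      rw [hrr] at h0
      rw [← h1] at h0
      exact one_ne_zero h0
end

end FQCA
end
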